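/- If a monomial ideal I in S = k[x_1,...,x_n] has linear quotients (with respect to some order of its minimal monomial generators), then the ideal m·I also has linear quotients, where m = (x_1,...,x_n) is the graded maximal ideal. -/

import Mathlib

open MvPolynomial

/-- An ideal of `k[x_1, ..., x_n]` is a monomial ideal if it is generated by monomials. -/
def IsMonomialIdeal {n : ℕ} {k : Type*} [Field k] (I : Ideal (MvPolynomial (Fin n) k)) : Prop :=
  ∃ S : Set (Fin n →₀ ℕ), I = Ideal.span ((fun m => MvPolynomial.monomial m (1 : k)) '' S)

/-- `m` is a minimal monomial generator of the monomial ideal `I`. -/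
def IsMinGen {n : ℕ} {k : Type*} [Field k] (I : Ideal (MvPolynomial (Fin n) k))
    (m : Fin n →₀ ℕ) : Prop :=
  MvPolynomial.monomial m (1 : k) ∈ I ∧
    ∀ m' : Fin n →₀ ℕ, m' ≤ m → m' ≠ m → MvPolynomial.monomial m' (1 : k) ∉ I

/-- An ideal is generated by variables if it is the span of a set of variables. -/
def GenByVars {n : ℕ} {k : Type*} [Field k] (J : Ideal (MvPolynomial (Fin n) k)) : Prop :=
  ∃ T : Set (Fin n), J = Ideal.span ((fun i => (X i : MvPolynomial (Fin n) k)) '' T)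

/-- A monomial ideal has linear quotients if its minimal monomial generators can be
ordered `u_1, ..., u_s` so that each colon ideal `(u_1, ..., u_{i-1}) : u_i` is
generated by variables. -/
def HasLinearQuotients {n : ℕ} {k : Type*} [Field k]
    (I : Ideal (MvPolynomial (Fin n) k)) : Prop :=
  ∃ (s : ℕ) (u : Fin s → (Fin n →₀ ℕ)), Function.Injective u ∧
    (∀ t, IsMinGen I (u t)) ∧ (∀ m, IsMinGen I m → ∃ t, u t = m) ∧
    ∀ t : Fin s, GenByVars
      ((Ideal.span ((fun r : Fin s => MvPolynomial.monomial (u r) (1 : k)) '' {r | r < t})).colon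
        (Ideal.span {MvPolynomial.monomial (u t) (1 : k)}))

namespace Stmt7Aux

variable {n : ℕ} {k : Type*} [Field k]

/-- total degree of an exponent vector -/
def degF {n : ℕ} (v : Fin n →₀ ℕ) : ℕ := ∑ j, v j

lemma degF_mono {v w : Fin n →₀ ℕ} (h : v ≤ w) : degF v ≤ degF w :=
  Finset.sum_le_sum fun j _ => Finsupp.le_def.mp h j

lemma degF_lt {v w : Fin n →₀ ℕ} (h : v ≤ w) (hne : v ≠ w) : degF v < degF w := by
  obtain ⟨a, ha⟩ := Finsupp.ne_iff.mp hne
  exact Finset.sum_lt_sum (fun j _ => Finsupp.le_def.mp h j)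
    ⟨a, Finset.mem_univ a, lt_of_le_of_ne (Finsupp.le_def.mp h a) ha⟩

lemma eq_of_le_degF {v w : Fin n →₀ ℕ} (h : v ≤ w) (hd : degF w ≤ degF v) : v = w := by
  by_contra hne
  exact absurd hd (not_le.mpr (degF_lt h hne))

lemma degF_add (a b : Fin n →₀ ℕ) : degF (a + b) = degF a + degF b := by
  simp [degF, Finsupp.add_apply, Finset.sum_add_distrib]

lemma degF_single (b : Fin n) : degF (Finsupp.single b (1:ℕ)) = 1 := by
  simp [degF, Finsupp.single_apply]

lemma exists_step {v w : Fin n →₀ ℕ} (h : v ≤ w) (hne : v ≠ w) :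
    ∃ b, Finsupp.single b 1 + v ≤ w := by
  obtain ⟨a, ha⟩ := Finsupp.ne_iff.mp hne
  have hav : v a < w a := lt_of_le_of_ne (Finsupp.le_def.mp h a) ha
  refine ⟨a, Finsupp.le_def.mpr fun j => ?_⟩
  rw [Finsupp.add_apply, Finsupp.single_apply]
  by_cases hj : a = j
  · subst hj; simp [Finsupp.le_def.mp h] ; omega
  · simpa [hj] using Finsupp.le_def.mp h j

lemma single_le_iff {b : Fin n} {v : Fin n →₀ ℕ} :
    Finsupp.single b 1 ≤ v ↔ 1 ≤ v b := by
  constructor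
  · intro h; simpa using Finsupp.le_def.mp h b
  · intro h
    refine Finsupp.le_def.mpr fun j => ?_
    rw [Finsupp.single_apply]
    by_cases hj : b = j
    · subst hj; simpa using h
    · simp [hj]

/-- membership in a monomial ideal -/
lemma mem_span_monomials_iff (G : Set (Fin n →₀ ℕ)) (p : MvPolynomial (Fin n) k) :
    p ∈ Ideal.span ((fun m => MvPolynomial.monomial m (1 : k)) '' G) ↔
      ∀ v ∈ p.support, ∃ g ∈ G, g ≤ v := by
  classical
  constructor
  · intro hp
    let J : Ideal (MvPolynomial (Fin n) k) :=
      { carrier := {q | ∀ v ∈ q.support, ∃ g ∈ G, g ≤ v}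
        add_mem' := by
          intro a b ha hb v hv
          rcases Finset.mem_union.mp (MvPolynomial.support_add hv) with h | h
          exacts [ha v h, hb v h]
        zero_mem' := by simp
        smul_mem' := by
          intro c q hq v hv
          rw [smul_eq_mul] at hv
          obtain ⟨a, _, b, hb, rfl⟩ := Finset.mem_add.mp (MvPolynomial.support_mul c q hv)
          obtain ⟨g, hg, hgb⟩ := hq b hb
          exact ⟨g, hg, hgb.trans le_add_self⟩ }
    have hle : Ideal.span ((fun m => MvPolynomial.monomial m (1 : k)) '' G) ≤ J := by
      rw [Ideal.span_le]
      rintro q hq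
      obtain ⟨g, hg, rfl⟩ := hq
      intro v hv
      rw [MvPolynomial.support_monomial, if_neg one_ne_zero, Finset.mem_singleton] at hv
      exact ⟨g, hg, hv.ge⟩
    exact hle hp
  · intro hp
    rw [MvPolynomial.as_sum p]
    apply Ideal.sum_mem
    intro v hv
    obtain ⟨g, hg, hgv⟩ := hp v hv
    have he : (MvPolynomial.monomial v) (MvPolynomial.coeff v p) =
        (MvPolynomial.monomial (v - g)) (MvPolynomial.coeff v p) *
          MvPolynomial.monomial g (1 : k) := by
      rw [MvPolynomial.monomial_mul, mul_one, tsub_add_cancel_of_le hgv]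
    rw [he]
    exact Ideal.mul_mem_left _ _ (Ideal.subset_span ⟨g, hg, rfl⟩)

lemma monomial_mem_span_iff (G : Set (Fin n →₀ ℕ)) (v : Fin n →₀ ℕ) :
    MvPolynomial.monomial v (1 : k) ∈
        Ideal.span ((fun m => MvPolynomial.monomial m (1 : k)) '' G) ↔
      ∃ g ∈ G, g ≤ v := by
  classical
  rw [mem_span_monomials_iff]
  constructor
  · intro h
    exact h v (by rw [MvPolynomial.support_monomial, if_neg (one_ne_zero (α := k))]; simp)
  · rintro ⟨g, hg, hgv⟩ v' hv'
    rw [MvPolynomial.support_monomial, if_neg (one_ne_zero (α := k)), Finset.mem_singleton] at hv'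
    subst hv'
    exact ⟨g, hg, hgv⟩


section Comb

variable {s : ℕ} (u : Fin s → (Fin n →₀ ℕ))

/-- combinatorial "minimal generator of m·I" -/
def IsMG (w : Fin n →₀ ℕ) : Prop :=
  (∃ b t, Finsupp.single b 1 + u t ≤ w) ∧
    ∀ v, v ≤ w → v ≠ w → ¬∃ b t, Finsupp.single b 1 + u t ≤ v

/-- canonical pair representing a minimal generator of m·I -/
def Canon (p : Fin s × Fin n) : Prop :=
  IsMG u (Finsupp.single p.2 1 + u p.1) ∧
    ∀ t, t < p.1 → ¬ u t ≤ Finsupp.single p.2 1 + u p.1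

/-- sort key -/
def keyL (p : Fin s × Fin n) : ℕ ×ₗ ℕ ×ₗ ℕ :=
  toLex (degF (u p.1), toLex (p.1.val, p.2.val))

lemma keyL_lt_iff (p q : Fin s × Fin n) :
    keyL u q < keyL u p ↔ degF (u q.1) < degF (u p.1) ∨
      (degF (u q.1) = degF (u p.1) ∧
        (q.1.val < p.1.val ∨ (q.1.val = p.1.val ∧ q.2.val < p.2.val))) := by
  simp [keyL, Prod.Lex.lt_iff]

lemma keyL_injective : Function.Injective (keyL u) := by
  intro p q h
  have h2 := toLex.injective h
  have h4 := toLex.injective (congrArg Prod.snd h2)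
  exact Prod.ext (Fin.ext (congrArg Prod.fst h4)) (Fin.ext (congrArg Prod.snd h4))

variable {u}

variable (hndvd : ∀ t t' : Fin s, u t' ≤ u t → t' = t)
variable (hadm : ∀ t r : Fin s, r < t →
  ∃ b, u t b < u r b ∧ ∃ r', r' < t ∧ u r' ≤ Finsupp.single b 1 + u t)

include hndvd in
lemma not_single_add_eq {t t' : Fin s} {b : Fin n} :
    u t' ≠ Finsupp.single b 1 + u t := by
  intro he
  have h1 : u t ≤ u t' := by rw [he]; exact le_add_self
  have h2 := hndvd t' t h1
  rw [← h2] at he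
  have := congrArg degF he
  rw [degF_add, degF_single] at this
  omega

include hndvd in
lemma W1 {w : Fin n →₀ ℕ} (hw : IsMG u w) {t : Fin s} (ht : u t ≤ w) :
    ∃ b, w = Finsupp.single b 1 + u t := by
  have hne : u t ≠ w := by
    rintro rfl
    obtain ⟨b, t', hbt⟩ := hw.1
    have h1 : u t' ≤ u t := le_trans le_add_self hbt
    have h2 := hndvd t t' h1
    subst h2
    have := degF_mono hbt
    rw [degF_add, degF_single] at this
    omega
  obtain ⟨b, hb⟩ := exists_step ht hne
  by_cases he : Finsupp.single b 1 + u t = w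
  · exact ⟨b, he.symm⟩
  · exact absurd ⟨b, t, le_rfl⟩ (hw.2 _ hb he)

/-- every "monomial of m·I" is above a minimal one -/
lemma W3 : ∀ v : Fin n →₀ ℕ, (∃ b t, Finsupp.single b 1 + u t ≤ v) →
    ∃ w, IsMG u w ∧ w ≤ v := by
  suffices H : ∀ d (v : Fin n →₀ ℕ), degF v ≤ d →
      (∃ b t, Finsupp.single b 1 + u t ≤ v) → ∃ w, IsMG u w ∧ w ≤ v by
    intro v hv; exact H (degF v) v le_rfl hv
  intro d
  induction d with
  | zero =>
    intro v hdv hv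
    obtain ⟨b, t, hbt⟩ := hv
    have := degF_mono hbt
    rw [degF_add, degF_single] at this
    omega
  | succ d ih =>
    intro v hdv hv
    by_cases hmin : IsMG u v
    · exact ⟨v, hmin, le_rfl⟩
    · rw [IsMG] at hmin
      push_neg at hmin
      obtain ⟨v', hle, hne, hv'⟩ := hmin hv
      have hd : degF v' < degF v := degF_lt hle hne
      obtain ⟨w, hw, hwv⟩ := ih v' (by omega) hv'
      exact ⟨w, hw, hwv.trans hle⟩

/-- canonical pair of a minimal generator -/
lemma canonOf (hndvd : ∀ t t' : Fin s, u t' ≤ u t → t' = t) {w : Fin n →₀ ℕ} (hw : IsMG u w) :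
    ∃ p : Fin s × Fin n, Canon u p ∧ w = Finsupp.single p.2 1 + u p.1 ∧
      ∀ t, u t ≤ w → p.1 ≤ t := by
  classical
  obtain ⟨b0, t0, hbt0⟩ := hw.1
  have hne0 : (Finset.univ.filter (fun t => u t ≤ w)).Nonempty :=
    ⟨t0, Finset.mem_filter.mpr ⟨Finset.mem_univ _, le_trans le_add_self hbt0⟩⟩
  set i := (Finset.univ.filter (fun t => u t ≤ w)).min' hne0 with hi
  have hiw : u i ≤ w := (Finset.mem_filter.mp ((Finset.univ.filter (fun t => u t ≤ w)).min'_mem hne0)).2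
  have hmin : ∀ t, u t ≤ w → i ≤ t := fun t ht =>
    Finset.min'_le _ t (Finset.mem_filter.mpr ⟨Finset.mem_univ _, ht⟩)
  obtain ⟨j, hj⟩ := W1 hndvd hw hiw
  refine ⟨(i, j), ⟨by rw [← hj]; exact hw, ?_⟩, hj, hmin⟩
  intro t ht hc
  rw [← hj] at hc
  exact absurd (hmin t hc) (not_le.mpr ht)

include hadm hndvd in
/-- Key induction: Lemma L -/
lemma lemmaL : ∀ (m i : Fin s) (j : Fin n), i < m → degF (u m) < degF (u i) →
    (∀ m', m' < i → ¬ u m' ≤ Finsupp.single j 1 + u i) →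
    ∃ b, b ≠ j ∧ u i b < u m b ∧ ∃ m', m' < i ∧ u m' ≤ Finsupp.single b 1 + u i := by
  suffices H : ∀ N (m : Fin s), m.val ≤ N → ∀ (i : Fin s) (j : Fin n), i < m →
      degF (u m) < degF (u i) →
      (∀ m', m' < i → ¬ u m' ≤ Finsupp.single j 1 + u i) →
      ∃ b, b ≠ j ∧ u i b < u m b ∧ ∃ m', m' < i ∧ u m' ≤ Finsupp.single b 1 + u i by
    intro m i j h1 h2 h3; exact H m.val m le_rfl i j h1 h2 h3
  intro N
  induction N with
  | zero =>
    intro m hm i j him _ _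
    exact absurd (lt_of_le_of_lt (Nat.zero_le _) (show i.val < m.val from him)) (by omega)
  | succ N ih =>
    intro m hm i j him hdeg hminimal
    obtain ⟨c, hc, m'', hm''m, hm''⟩ := hadm m i him
    have hne : u m'' ≠ Finsupp.single c 1 + u m := not_single_add_eq hndvd
    have hdegm'' : degF (u m'') < degF (u i) := by
      have h1 := degF_lt hm'' hne
      rw [degF_add, degF_single] at h1
      omega
    have hm''ne_i : m'' ≠ i := by
      intro he; rw [he] at hdegm''; omega
    rcases lt_or_gt_of_ne hm''ne_i with hlt | hgt
    · obtain ⟨b, hb, m', hm'i, hm'⟩ := hadm i m'' hlt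
      have hbj : b ≠ j := fun he => hminimal m' hm'i (he ▸ hm')
      have hbc : b ≠ c := by
        intro he; subst he
        have h2 := Finsupp.le_def.mp hm'' b
        simp [Finsupp.add_apply, Finsupp.single_apply] at h2
        omega
      have hub : u i b < u m b := by
        have h2 := Finsupp.le_def.mp hm'' b
        rw [Finsupp.add_apply, Finsupp.single_apply, if_neg (fun hh => hbc hh.symm)] at h2
        omega
      exact ⟨b, hbj, hub, m', hm'i, hm'⟩
    · have h3 : m''.val < m.val := hm''m
      obtain ⟨b, hbj, hub, m', hm'i, hm'⟩ := ih m'' (by omega) i j hgt hdegm'' hminimal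
      have h2 := Finsupp.le_def.mp hm'' b
      rw [Finsupp.add_apply, Finsupp.single_apply] at h2
      by_cases hcb : c = b
      · subst hcb
        rw [if_pos rfl] at h2
        exfalso; omega
      · rw [if_neg hcb] at h2
        exact ⟨b, hbj, by omega, m', hm'i, hm'⟩

lemma keyL_lt_iff' (i m : Fin s) (j l : Fin n) :
    keyL u (m, l) < keyL u (i, j) ↔ degF (u m) < degF (u i) ∨
      (degF (u m) = degF (u i) ∧ (m.val < i.val ∨ (m.val = i.val ∧ l.val < j.val))) := by
  simp [keyL, Prod.Lex.lt_iff]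

include hndvd in
lemma finisher (i m' : Fin s) (j b : Fin n) (hm'i : m' < i)
    (hm' : u m' ≤ Finsupp.single b 1 + u i) :
    ∃ p' : Fin s × Fin n, Canon u p' ∧ keyL u p' < keyL u (i, j) ∧
      Finsupp.single p'.2 1 + u p'.1 ≤
        Finsupp.single b 1 + (Finsupp.single j 1 + u i) := by
  have hne : u m' ≠ Finsupp.single b 1 + u i := not_single_add_eq hndvd
  have hdeg : degF (u m') ≤ degF (u i) := by
    have h1 := degF_lt hm' hne
    rw [degF_add, degF_single] at h1; omega
  obtain ⟨c, hc⟩ := exists_step hm' hne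
  obtain ⟨w'', hw'', hwle⟩ := W3 (Finsupp.single c 1 + u m') ⟨c, m', le_rfl⟩
  obtain ⟨p', hp', hwp', hminp'⟩ := canonOf hndvd hw''
  obtain ⟨i'', j''⟩ := p'
  dsimp only at hwp' hminp' hp'
  have hdw : degF w'' = degF (u i'') + 1 := by
    rw [hwp', degF_add, degF_single]; omega
  have hdle : degF w'' ≤ degF (u m') + 1 := by
    have := degF_mono hwle; rw [degF_add, degF_single] at this; omega
  refine ⟨(i'', j''), hp', ?_, ?_⟩
  · rw [keyL_lt_iff']
    by_cases hcase : degF w'' < degF (u i) + 1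
    · left; omega
    · have heq : degF w'' = degF (u i) + 1 := by omega
      have heqw : w'' = Finsupp.single c 1 + u m' := by
        apply eq_of_le_degF hwle
        rw [degF_add, degF_single]; omega
      have hle1 : i'' ≤ m' := hminp' m' (by rw [heqw]; exact le_add_self)
      refine Or.inr ⟨by omega, Or.inl ?_⟩
      exact lt_of_le_of_lt (show i''.val ≤ m'.val from hle1) hm'i
  · calc Finsupp.single j'' 1 + u i'' = w'' := hwp'.symm
    _ ≤ Finsupp.single c 1 + u m' := hwle
    _ ≤ Finsupp.single b 1 + u i := hc
    _ ≤ Finsupp.single b 1 + (Finsupp.single j 1 + u i) := add_le_add_right le_add_self _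

include hadm hndvd in
lemma pairLemma (p q : Fin s × Fin n) (hp : Canon u p) (hq : Canon u q)
    (hlt : keyL u q < keyL u p) :
    ∃ b, (Finsupp.single p.2 1 + u p.1 : Fin n →₀ ℕ) b <
        (Finsupp.single q.2 1 + u q.1 : Fin n →₀ ℕ) b ∧
      ∃ p' : Fin s × Fin n, Canon u p' ∧ keyL u p' < keyL u p ∧
        Finsupp.single p'.2 1 + u p'.1 ≤
          Finsupp.single b 1 + (Finsupp.single p.2 1 + u p.1) := by
  obtain ⟨i, j⟩ := p
  obtain ⟨m, l⟩ := q
  dsimp only at hp hq ⊢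
  rw [keyL_lt_iff'] at hlt
  rcases lt_trichotomy m i with him | him | him
  · -- m < i : use admissibility of u at i
    obtain ⟨b, hb, m', hm'i, hm'⟩ := hadm i m him
    have hbj : b ≠ j := fun he => hp.2 m' hm'i (he ▸ hm')
    refine ⟨b, ?_, finisher hndvd i m' j b hm'i hm'⟩
    have h0 : (Finsupp.single j 1 + u i : Fin n →₀ ℕ) b = u i b := by
      rw [Finsupp.add_apply, Finsupp.single_apply, if_neg (fun hh => hbj hh.symm), zero_add]
    have h1 : u m b ≤ (Finsupp.single l 1 + u m : Fin n →₀ ℕ) b := by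
      rw [Finsupp.add_apply]; exact Nat.le_add_left _ _
    rw [h0]; omega
  · -- m = i : within the same u-generator
    subst him
    have hlj : l.val < j.val := by
      rcases hlt with h | ⟨_, h | ⟨_, h⟩⟩
      · omega
      · omega
      · exact h
    have hljne : l ≠ j := Fin.ne_of_val_ne (by omega)
    refine ⟨l, ?_, (m, l), hq, ?_, ?_⟩
    · rw [Finsupp.add_apply, Finsupp.add_apply, Finsupp.single_apply, Finsupp.single_apply,
        if_neg (fun hh => hljne hh.symm), if_pos rfl]
      omega
    · rw [keyL_lt_iff']
      exact Or.inr ⟨rfl, Or.inr ⟨rfl, hlj⟩⟩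
    · exact add_le_add_right le_add_self _
  · -- i < m : the hard case, via lemmaL
    have hdeg : degF (u m) < degF (u i) := by
      rcases hlt with h | ⟨_, h | ⟨h, _⟩⟩
      · exact h
      · exfalso; have : i.val < m.val := him; omega
      · exfalso; have : i.val < m.val := him; omega
    obtain ⟨b, hbj, hub, m', hm'i, hm'⟩ := lemmaL hndvd hadm m i j him hdeg hp.2
    refine ⟨b, ?_, finisher hndvd i m' j b hm'i hm'⟩
    have h0 : (Finsupp.single j 1 + u i : Fin n →₀ ℕ) b = u i b := by
      rw [Finsupp.add_apply, Finsupp.single_apply, if_neg (fun hh => hbj hh.symm), zero_add]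
    have h1 : u m b ≤ (Finsupp.single l 1 + u m : Fin n →₀ ℕ) b := by
      rw [Finsupp.add_apply]; exact Nat.le_add_left _ _
    rw [h0]; omega

end Comb

lemma exists_isMinGen_le (J : Ideal (MvPolynomial (Fin n) k)) :
    ∀ v : Fin n →₀ ℕ, MvPolynomial.monomial v (1:k) ∈ J →
      ∃ w, IsMinGen J w ∧ w ≤ v := by
  suffices H : ∀ d (v : Fin n →₀ ℕ), degF v ≤ d → MvPolynomial.monomial v (1:k) ∈ J →
      ∃ w, IsMinGen J w ∧ w ≤ v by
    intro v hv; exact H (degF v) v le_rfl hv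
  intro d
  induction d with
  | zero =>
    intro v hdv hv
    exact ⟨v, ⟨hv, fun m' hle hne _ =>
      absurd (eq_of_le_degF hle (le_trans hdv (Nat.zero_le _))) hne⟩, le_rfl⟩
  | succ d ih =>
    intro v hdv hv
    by_cases hmin : IsMinGen J v
    · exact ⟨v, hmin, le_rfl⟩
    · have hex : ∃ v', v' ≤ v ∧ v' ≠ v ∧ MvPolynomial.monomial v' (1:k) ∈ J := by
        by_contra hc
        push_neg at hc
        exact hmin ⟨hv, fun m' h1 h2 => hc m' h1 h2⟩
      obtain ⟨v', h1, h2, h3⟩ := hex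
      have hd := degF_lt h1 h2
      obtain ⟨w, hw, hwv⟩ := ih v' (by omega) h3
      exact ⟨w, hw, hwv.trans h1⟩

lemma colon_mem_iff (P : Ideal (MvPolynomial (Fin n) k)) (x p : MvPolynomial (Fin n) k) :
    p ∈ P.colon (Ideal.span {x}) ↔ p * x ∈ P := by
  rw [← Ideal.submodule_span_eq, Submodule.mem_colon_span_singleton, smul_eq_mul]

end Stmt7Aux

theorem stmt7' {n : ℕ} {k : Type*} [Field k] (I : Ideal (MvPolynomial (Fin n) k))
    (hI : IsMonomialIdeal I) (h : HasLinearQuotients I) :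
    HasLinearQuotients
      (Ideal.span (Set.range (X : Fin n → MvPolynomial (Fin n) k)) * I) := by
  classical
  obtain ⟨s, u, huinj, humin, husurj, hucolon⟩ := h
  -- (A) no divisibility among the minimal generators
  have hndvd : ∀ t t' : Fin s, u t' ≤ u t → t' = t := by
    intro t t' hle
    by_cases he : u t' = u t
    · exact huinj he
    · exact absurd (humin t').1 ((humin t).2 (u t') hle he)
  -- (B) I is spanned by the monomials of its minimal generators
  have hIle : ∀ v : Fin n →₀ ℕ, MvPolynomial.monomial v (1:k) ∈ I → ∃ t, u t ≤ v := by
    intro v hv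
    obtain ⟨w, hw, hwv⟩ := Stmt7Aux.exists_isMinGen_le I v hv
    obtain ⟨t, rfl⟩ := husurj w hw
    exact ⟨t, hwv⟩
  have hIeq : I = Ideal.span ((fun m => MvPolynomial.monomial m (1:k)) '' Set.range u) := by
    obtain ⟨S, hS⟩ := hI
    apply le_antisymm
    · nth_rewrite 1 [hS]
      rw [Ideal.span_le]
      rintro q hq
      obtain ⟨g, hg, rfl⟩ := hq
      have hgI : MvPolynomial.monomial g (1:k) ∈ I := hS ▸ Ideal.subset_span ⟨g, hg, rfl⟩
      obtain ⟨t, ht⟩ := hIle g hgI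
      exact (Stmt7Aux.monomial_mem_span_iff _ _).mpr ⟨u t, ⟨t, rfl⟩, ht⟩
    · rw [Ideal.span_le]
      rintro q hq
      obtain ⟨g, ⟨t, rfl⟩, rfl⟩ := hq
      exact (humin t).1
  -- (C) m·I is the monomial ideal on V
  have hmI : Ideal.span (Set.range (X : Fin n → MvPolynomial (Fin n) k)) * I
      = Ideal.span ((fun m => MvPolynomial.monomial m (1:k)) ''
          {v : Fin n →₀ ℕ | ∃ b t, v = Finsupp.single b 1 + u t}) := by
    rw [hIeq]
    have hrX : Set.range (X : Fin n → MvPolynomial (Fin n) k)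
        = (fun m => MvPolynomial.monomial m (1:k)) ''
            Set.range (fun b : Fin n => Finsupp.single b 1) := by
      rw [← Set.range_comp]; rfl
    rw [hrX, Ideal.span_mul_span']
    congr 1
    ext z
    constructor
    · intro hz
      obtain ⟨x, hx, y, hy, rfl⟩ := Set.mem_mul.mp hz
      obtain ⟨a, ⟨b, rfl⟩, rfl⟩ := hx
      obtain ⟨c, ⟨t, rfl⟩, rfl⟩ := hy
      exact ⟨Finsupp.single b 1 + u t, ⟨b, t, rfl⟩,
        by rw [MvPolynomial.monomial_mul, one_mul]⟩
    · rintro ⟨v, ⟨b, t, rfl⟩, rfl⟩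
      exact Set.mem_mul.mpr ⟨_, ⟨Finsupp.single b 1, ⟨b, rfl⟩, rfl⟩, _,
        ⟨u t, ⟨t, rfl⟩, rfl⟩, by rw [MvPolynomial.monomial_mul, one_mul]⟩
  rw [hmI]
  -- (D) membership characterization
  have hmem : ∀ v : Fin n →₀ ℕ,
      MvPolynomial.monomial v (1:k) ∈ Ideal.span ((fun m => MvPolynomial.monomial m (1:k)) ''
        {v : Fin n →₀ ℕ | ∃ b t, v = Finsupp.single b 1 + u t}) ↔
      ∃ b t, Finsupp.single b 1 + u t ≤ v := by
    intro v
    rw [Stmt7Aux.monomial_mem_span_iff]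
    constructor
    · rintro ⟨g, ⟨b, t, rfl⟩, hle⟩; exact ⟨b, t, hle⟩
    · rintro ⟨b, t, hle⟩; exact ⟨_, ⟨b, t, rfl⟩, hle⟩
  -- (E) IsMinGen of m·I ↔ IsMG
  have hMG : ∀ w, IsMinGen (Ideal.span ((fun m => MvPolynomial.monomial m (1:k)) ''
        {v : Fin n →₀ ℕ | ∃ b t, v = Finsupp.single b 1 + u t})) w ↔ Stmt7Aux.IsMG u w := by
    intro w
    unfold IsMinGen Stmt7Aux.IsMG
    rw [hmem]
    constructor
    · rintro ⟨h1, h2⟩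
      exact ⟨h1, fun v hle hne hc => h2 v hle hne ((hmem v).mpr hc)⟩
    · rintro ⟨h1, h2⟩
      exact ⟨h1, fun v hle hne hc => h2 v hle hne ((hmem v).mp hc)⟩
  -- (F) combinatorial admissibility of the order on I
  have hadm : ∀ t r : Fin s, r < t →
      ∃ b, u t b < u r b ∧ ∃ r', r' < t ∧ u r' ≤ Finsupp.single b 1 + u t := by
    intro t r hrt
    obtain ⟨T, hT⟩ := hucolon t
    have hpre : ((fun r : Fin s => MvPolynomial.monomial (u r) (1:k)) '' {r | r < t})
        = (fun m => MvPolynomial.monomial m (1:k)) '' (u '' {r | r < t}) := by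
      ext z
      simp only [Set.mem_image, Set.mem_setOf_eq]
      constructor
      · rintro ⟨r, hr, rfl⟩; exact ⟨u r, ⟨r, hr, rfl⟩, rfl⟩
      · rintro ⟨m, ⟨r, hr, rfl⟩, rfl⟩; exact ⟨r, hr, rfl⟩
    have h1 : MvPolynomial.monomial (u r - u t) (1:k) ∈
        (Ideal.span ((fun r : Fin s => MvPolynomial.monomial (u r) (1:k)) '' {r | r < t})).colon
          (Ideal.span {MvPolynomial.monomial (u t) (1:k)}) := by
      rw [Stmt7Aux.colon_mem_iff, MvPolynomial.monomial_mul, one_mul, hpre]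
      exact (Stmt7Aux.monomial_mem_span_iff _ _).mpr ⟨u r, ⟨r, hrt, rfl⟩, le_tsub_add⟩
    rw [hT] at h1
    have hXT : ((fun i => (X i : MvPolynomial (Fin n) k)) '' T)
        = (fun m => MvPolynomial.monomial m (1:k)) ''
            ((fun b : Fin n => Finsupp.single b 1) '' T) := by
      ext z
      simp only [Set.mem_image]
      constructor
      · rintro ⟨b, hb, rfl⟩; exact ⟨_, ⟨b, hb, rfl⟩, rfl⟩
      · rintro ⟨m, ⟨b, hb, rfl⟩, rfl⟩; exact ⟨b, hb, rfl⟩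
    rw [hXT] at h1
    obtain ⟨g, hmemg, hg⟩ := (Stmt7Aux.monomial_mem_span_iff _ _).mp h1
    obtain ⟨b, hbT, rfl⟩ := hmemg
    have hb : u t b < u r b := by
      have h2 := Finsupp.le_def.mp hg b
      rw [Finsupp.single_apply, if_pos rfl, Finsupp.tsub_apply] at h2
      omega
    have h2 : (X b : MvPolynomial (Fin n) k) ∈
        Ideal.span ((fun i => (X i : MvPolynomial (Fin n) k)) '' T) :=
      Ideal.subset_span ⟨b, hbT, rfl⟩
    rw [← hT, Stmt7Aux.colon_mem_iff] at h2
    have h3 : (X b : MvPolynomial (Fin n) k) * MvPolynomial.monomial (u t) (1:k)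
        = MvPolynomial.monomial (Finsupp.single b 1 + u t) (1:k) := by
      rw [show (X b : MvPolynomial (Fin n) k)
          = MvPolynomial.monomial (Finsupp.single b 1) 1 from rfl,
        MvPolynomial.monomial_mul, one_mul]
    rw [h3, hpre] at h2
    obtain ⟨g, hmemg, hgle⟩ := (Stmt7Aux.monomial_mem_span_iff _ _).mp h2
    obtain ⟨r', hr't, rfl⟩ := hmemg
    exact ⟨b, hb, r', hr't, hgle⟩
  -- (G) enumeration of the minimal generators of m·I
  set F : Finset (Fin s × Fin n) := Finset.univ.filter (fun p => Stmt7Aux.Canon u p) with hF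
  set G : Finset (ℕ ×ₗ ℕ ×ₗ ℕ) := F.image (Stmt7Aux.keyL u) with hG
  set e := G.orderIsoOfFin rfl with he
  have hex : ∀ t : Fin G.card, ∃ p, p ∈ F ∧ Stmt7Aux.keyL u p = (e t : ℕ ×ₗ ℕ ×ₗ ℕ) := by
    intro t
    obtain ⟨p, hp, hpe⟩ := Finset.mem_image.mp (e t).2
    exact ⟨p, hp, hpe⟩
  choose pf hpF hpκ using hex
  have hcanon : ∀ t, Stmt7Aux.Canon u (pf t) := fun t => (Finset.mem_filter.mp (hpF t)).2
  have horder : ∀ t t' : Fin G.card, t < t' ↔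
      Stmt7Aux.keyL u (pf t) < Stmt7Aux.keyL u (pf t') := by
    intro t t'
    rw [hpκ, hpκ, Subtype.coe_lt_coe]
    exact e.lt_iff_lt.symm
  have hsurF : ∀ p ∈ F, ∃ t, pf t = p := by
    intro p hp
    have hk : Stmt7Aux.keyL u p ∈ G := Finset.mem_image_of_mem _ hp
    obtain ⟨t, ht⟩ := e.surjective ⟨_, hk⟩
    refine ⟨t, Stmt7Aux.keyL_injective u ?_⟩
    rw [hpκ, ht]
  have hcanonuniq : ∀ p q : Fin s × Fin n, Stmt7Aux.Canon u p → Stmt7Aux.Canon u q →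
      Finsupp.single p.2 1 + u p.1 = Finsupp.single q.2 1 + u q.1 → p = q := by
    intro p q hp hq heq
    have h1 : p.1 = q.1 := by
      by_contra hne
      rcases lt_or_gt_of_ne hne with hlt | hlt
      · exact hq.2 p.1 hlt (heq ▸ le_add_self)
      · exact hp.2 q.1 hlt (heq ▸ le_add_self)
    rw [h1] at heq
    have h2 : Finsupp.single p.2 (1:ℕ) = Finsupp.single q.2 1 := add_right_cancel heq
    exact Prod.ext h1 (Finsupp.single_left_injective one_ne_zero h2)
  refine ⟨G.card, fun t => Finsupp.single (pf t).2 1 + u (pf t).1, ?_, ?_, ?_, ?_⟩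
  · -- injectivity
    intro t t' hh
    have h1 : pf t = pf t' := hcanonuniq _ _ (hcanon t) (hcanon t') hh
    have h2 : (e t : ℕ ×ₗ ℕ ×ₗ ℕ) = e t' := by rw [← hpκ, ← hpκ, h1]
    exact e.injective (Subtype.ext h2)
  · -- minimal generators
    intro t
    exact (hMG _).mpr (hcanon t).1
  · -- surjectivity onto minimal generators
    intro w hw
    obtain ⟨p, hp, hwdec, hmin⟩ := Stmt7Aux.canonOf hndvd ((hMG w).mp hw)
    obtain ⟨t, ht⟩ := hsurF p (Finset.mem_filter.mpr ⟨Finset.mem_univ _, hp⟩)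
    refine ⟨t, ?_⟩
    show Finsupp.single (pf t).2 1 + u (pf t).1 = w
    rw [ht]
    exact hwdec.symm
  · -- colon ideals are generated by variables
    intro t
    dsimp only
    refine ⟨{b : Fin n | ∃ r', r' < t ∧
      Finsupp.single (pf r').2 1 + u (pf r').1 ≤
        Finsupp.single b 1 + (Finsupp.single (pf t).2 1 + u (pf t).1)}, ?_⟩
    have hpair : ∀ r, r < t →
        ∃ b, (Finsupp.single (pf t).2 1 + u (pf t).1 : Fin n →₀ ℕ) b <
            (Finsupp.single (pf r).2 1 + u (pf r).1 : Fin n →₀ ℕ) b ∧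
          ∃ r', r' < t ∧ Finsupp.single (pf r').2 1 + u (pf r').1 ≤
            Finsupp.single b 1 + (Finsupp.single (pf t).2 1 + u (pf t).1) := by
      intro r hrt
      obtain ⟨b, hb, p', hp', hklt, hple⟩ := Stmt7Aux.pairLemma hndvd hadm (pf t) (pf r)
        (hcanon t) (hcanon r) ((horder r t).mp hrt)
      obtain ⟨r', hr'⟩ := hsurF p' (Finset.mem_filter.mpr ⟨Finset.mem_univ _, hp'⟩)
      have hr't : r' < t := (horder r' t).mpr (by rw [hr']; exact hklt)
      exact ⟨b, hb, r', hr't, by rw [hr']; exact hple⟩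
    have hpre : ((fun r : Fin G.card =>
          MvPolynomial.monomial (Finsupp.single (pf r).2 1 + u (pf r).1) (1:k)) '' {r | r < t})
        = (fun m => MvPolynomial.monomial m (1:k)) ''
            ((fun r : Fin G.card => Finsupp.single (pf r).2 1 + u (pf r).1) '' {r | r < t}) := by
      ext z
      simp only [Set.mem_image, Set.mem_setOf_eq]
      constructor
      · rintro ⟨r, hr, rfl⟩; exact ⟨_, ⟨r, hr, rfl⟩, rfl⟩
      · rintro ⟨m, ⟨r, hr, rfl⟩, rfl⟩; exact ⟨r, hr, rfl⟩
    apply le_antisymm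
    · intro p hp
      rw [Stmt7Aux.colon_mem_iff, hpre] at hp
      have hsupp := (Stmt7Aux.mem_span_monomials_iff _ _).mp hp
      have hXT : ((fun i => (X i : MvPolynomial (Fin n) k)) ''
              {b : Fin n | ∃ r', r' < t ∧
                Finsupp.single (pf r').2 1 + u (pf r').1 ≤
                  Finsupp.single b 1 + (Finsupp.single (pf t).2 1 + u (pf t).1)})
          = (fun m => MvPolynomial.monomial m (1:k)) ''
              ((fun b : Fin n => Finsupp.single b 1) ''
                {b : Fin n | ∃ r', r' < t ∧
                  Finsupp.single (pf r').2 1 + u (pf r').1 ≤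
                    Finsupp.single b 1 + (Finsupp.single (pf t).2 1 + u (pf t).1)}) := by
        ext z
        simp only [Set.mem_image, Set.mem_setOf_eq]
        constructor
        · rintro ⟨b, hb, rfl⟩; exact ⟨_, ⟨b, hb, rfl⟩, rfl⟩
        · rintro ⟨m, ⟨b, hb, rfl⟩, rfl⟩; exact ⟨b, hb, rfl⟩
      rw [hXT]
      apply (Stmt7Aux.mem_span_monomials_iff _ _).mpr
      intro v hv
      have hvmem : v + (Finsupp.single (pf t).2 1 + u (pf t).1) ∈
          (p * MvPolynomial.monomial (Finsupp.single (pf t).2 1 + u (pf t).1) (1:k)).support := by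
        rw [MvPolynomial.mem_support_iff, MvPolynomial.coeff_mul_monomial', if_pos le_add_self,
          add_tsub_cancel_right, mul_one]
        exact MvPolynomial.mem_support_iff.mp hv
      obtain ⟨g, hgmem, hgle⟩ := hsupp _ hvmem
      obtain ⟨r, hrt, rfl⟩ := hgmem
      obtain ⟨b, hb, hbT⟩ := hpair r hrt
      refine ⟨Finsupp.single b 1, ⟨b, hbT, rfl⟩, Stmt7Aux.single_le_iff.mpr ?_⟩
      have h4 := Finsupp.le_def.mp hgle b
      simp only [Finsupp.add_apply] at h4 hb
      omega
    · rw [Ideal.span_le]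
      rintro q hq
      obtain ⟨b, hbT, rfl⟩ := hq
      obtain ⟨r', hr't, hrle⟩ := hbT
      rw [SetLike.mem_coe, Stmt7Aux.colon_mem_iff]
      have h3 : (X b : MvPolynomial (Fin n) k) *
            MvPolynomial.monomial (Finsupp.single (pf t).2 1 + u (pf t).1) (1:k)
          = MvPolynomial.monomial
              (Finsupp.single b 1 + (Finsupp.single (pf t).2 1 + u (pf t).1)) (1:k) := by
        rw [show (X b : MvPolynomial (Fin n) k)
            = MvPolynomial.monomial (Finsupp.single b 1) 1 from rfl,
          MvPolynomial.monomial_mul, one_mul]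
      rw [h3, hpre]
      exact (Stmt7Aux.monomial_mem_span_iff _ _).mpr ⟨_, ⟨r', hr't, rfl⟩, hrle⟩

theorem stmt7 {n : ℕ} {k : Type*} [Field k] (I : Ideal (MvPolynomial (Fin n) k))
    (hI : IsMonomialIdeal I) (h : HasLinearQuotients I) :
    HasLinearQuotients
      (Ideal.span (Set.range (X : Fin n → MvPolynomial (Fin n) k)) * I) := by
  exact stmt7' I hI h
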